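/- The number of partitions λ_1 ≥ λ_2 ≥ ... ≥ λ_k ≥ 0 of n satisfying λ_1 ≥ Σ_{i=2}^k λ_i equals the number of ways to write n = s_1 + Σ_{i=1}^{k-1} 2i·t_i with s_1, t_1,...,t_{k-1} nonnegative integers; i.e., the generating function is (1-q)^{-1} Π_{i=1}^{k-1}(1-q^{2i})^{-1}. -/

import Mathlib

open Finset

namespace Stmt10Aux

/-- extend a `Fin m`-indexed family by zero -/
def ext' (m : ℕ) (t : Fin m → ℕ) (j : ℕ) : ℕ :=
  if h : j < m then t ⟨j, h⟩ else 0

lemma tele1 (a : ℕ → ℕ) (ha : ∀ i, a (i + 1) ≤ a i) (m : ℕ) :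
    ∑ i ∈ range m, (i + 1) * (a i - a (i + 1)) + m * a m = ∑ j ∈ range m, a j := by
  induction m with
  | zero => simp
  | succ m ih =>
    rw [sum_range_succ, sum_range_succ (f := a)]
    have h2 : (m + 1) * (a m - a (m + 1)) + (m + 1) * a (m + 1) = (m + 1) * a m := by
      rw [← Nat.mul_add, Nat.sub_add_cancel (ha m)]
    rw [add_assoc, h2, Nat.succ_mul, ← add_assoc, ih]

lemma tele2 (a : ℕ → ℕ) (ha : ∀ i, a (i + 1) ≤ a i) :
    ∀ m i, i ≤ m → ∑ j ∈ Ico i m, (a j - a (j + 1)) + a m = a i := by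
  intro m
  induction m with
  | zero => intro i hi; simp [Nat.le_zero.mp hi]
  | succ m ih =>
    intro i hi
    rcases Nat.lt_or_ge i (m + 1) with h | h
    · have hi' : i ≤ m := by omega
      rw [Finset.sum_Ico_succ_top hi', add_assoc,
        Nat.sub_add_cancel (ha m), ih i hi']
    · have : i = m + 1 := by omega
      simp [this]

lemma swap1 (m : ℕ) (t : ℕ → ℕ) :
    ∑ i ∈ range m, ∑ j ∈ range m, (if i ≤ j then t j else 0)
      = ∑ j ∈ range m, (j + 1) * t j := by
  rw [Finset.sum_comm]
  refine Finset.sum_congr rfl fun j hj => ?_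
  rw [Finset.mem_range] at hj
  rw [← Finset.sum_filter]
  have h : (range m).filter (fun i => i ≤ j) = range (j + 1) := by
    ext x; simp only [Finset.mem_filter, Finset.mem_range]; omega
  rw [h, Finset.sum_const, Finset.card_range, smul_eq_mul]

/-- the shifted, zero-extended tail of `lam` -/
def bfun (m : ℕ) (lam : Fin (m + 1) → ℕ) (j : ℕ) : ℕ := ext' (m + 1) lam (j + 1)

/-- forward map: partition ↦ (s, t) -/
def F (m : ℕ) (lam : Fin (m + 1) → ℕ) : ℕ × (Fin m → ℕ) :=
  (lam 0 - ∑ i : Fin m, lam i.succ,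
   fun i => bfun m lam (i : ℕ) - bfun m lam ((i : ℕ) + 1))

/-- backward map: (s, t) ↦ partition -/
def G (m : ℕ) (st : ℕ × (Fin m → ℕ)) : Fin (m + 1) → ℕ :=
  fun j => if (j : ℕ) = 0 then st.1 + ∑ i : Fin m, ((i : ℕ) + 1) * st.2 i
    else ∑ l ∈ Ico ((j : ℕ) - 1) m, ext' m st.2 l

variable {m : ℕ}

lemma bfun_step (lam : Fin (m + 1) → ℕ) (hA : Antitone lam) (j : ℕ) :
    bfun m lam (j + 1) ≤ bfun m lam j := by
  unfold bfun ext'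
  split_ifs with h1 h2
  · exact hA (Fin.mk_le_mk.mpr (by omega))
  · omega
  · exact Nat.zero_le _
  · exact le_rfl

lemma bfun_last (lam : Fin (m + 1) → ℕ) : bfun m lam m = 0 :=
  dif_neg (by omega)

lemma bfun_eq (lam : Fin (m + 1) → ℕ) (i : Fin m) : bfun m lam (i : ℕ) = lam i.succ := by
  unfold bfun ext'
  rw [dif_pos (by omega : (i : ℕ) + 1 < m + 1)]
  exact congrArg lam (Fin.ext rfl)

lemma ext'_coe (t : Fin m → ℕ) (i : Fin m) : ext' m t (i : ℕ) = t i := by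
  rw [ext', dif_pos i.isLt]

lemma sumF (lam : Fin (m + 1) → ℕ) (hA : Antitone lam) :
    ∑ i : Fin m, ((i : ℕ) + 1) * (bfun m lam (i : ℕ) - bfun m lam ((i : ℕ) + 1))
      = ∑ i : Fin m, lam i.succ := by
  have h1 : ∑ i : Fin m, lam i.succ = ∑ j ∈ range m, bfun m lam j := by
    rw [← Fin.sum_univ_eq_sum_range]
    exact Finset.sum_congr rfl fun i _ => (bfun_eq lam i).symm
  rw [h1, Fin.sum_univ_eq_sum_range
    (fun j => (j + 1) * (bfun m lam j - bfun m lam (j + 1)))]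
  have := tele1 (bfun m lam) (bfun_step lam hA) m
  rw [bfun_last lam] at this
  omega

lemma Ico_eq_filter (i : ℕ) : Ico i m = (range m).filter (fun l => i ≤ l) := by
  ext x; simp only [mem_Ico, Finset.mem_filter, Finset.mem_range]; omega

lemma sumG (st : ℕ × (Fin m → ℕ)) :
    ∑ i : Fin m, G m st i.succ = ∑ i : Fin m, ((i : ℕ) + 1) * st.2 i := by
  have h0 : ∀ i : Fin m, G m st i.succ = ∑ l ∈ Ico (i : ℕ) m, ext' m st.2 l := by
    intro i
    show (if ((i : ℕ) + 1 : ℕ) = 0 then _ else _) = _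
    rw [if_neg (by omega)]
    simp
  rw [Finset.sum_congr rfl fun i _ => h0 i,
    Fin.sum_univ_eq_sum_range (fun i => ∑ l ∈ Ico i m, ext' m st.2 l)]
  have h1 : ∀ i : ℕ, ∑ l ∈ Ico i m, ext' m st.2 l
      = ∑ l ∈ range m, if i ≤ l then ext' m st.2 l else 0 := by
    intro i; rw [Ico_eq_filter, Finset.sum_filter]
  rw [Finset.sum_congr rfl fun i _ => h1 i, swap1,
    ← Fin.sum_univ_eq_sum_range (fun j => (j + 1) * ext' m st.2 j)]
  exact Finset.sum_congr rfl fun i _ => by rw [ext'_coe]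

lemma GF (lam : Fin (m + 1) → ℕ) (hA : Antitone lam)
    (hle : ∑ i : Fin m, lam i.succ ≤ lam 0) : G m (F m lam) = lam := by
  funext j
  by_cases hj : (j : ℕ) = 0
  · have hj0 : j = 0 := Fin.ext (by simpa using hj)
    subst hj0
    show (if (((0 : Fin (m + 1)) : ℕ) = 0) then _ else _) = _
    rw [if_pos (by simp)]
    show lam 0 - (∑ i : Fin m, lam i.succ) + ∑ i : Fin m, ((i : ℕ) + 1) *
      (bfun m lam (i : ℕ) - bfun m lam ((i : ℕ) + 1)) = lam 0
    rw [sumF lam hA]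
    omega
  · show (if ((j : ℕ) = 0) then _ else _) = _
    rw [if_neg hj]
    have hjm : (j : ℕ) - 1 ≤ m := by have := j.isLt; omega
    have hc : ∀ l ∈ Ico ((j : ℕ) - 1) m,
        ext' m (F m lam).2 l = bfun m lam l - bfun m lam (l + 1) := by
      intro l hl
      rw [mem_Ico] at hl
      rw [ext', dif_pos hl.2]
      rfl
    rw [Finset.sum_congr rfl hc]
    have := tele2 (bfun m lam) (bfun_step lam hA) m ((j : ℕ) - 1) hjm
    rw [bfun_last lam, add_zero] at this
    rw [this]
    have : (j : ℕ) - 1 + 1 = (j : ℕ) := by omega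
    rw [bfun, this, ext', dif_pos j.isLt]

lemma G_head (st : ℕ × (Fin m → ℕ)) :
    G m st 0 = st.1 + ∑ i : Fin m, ((i : ℕ) + 1) * st.2 i := by
  show (if (((0 : Fin (m + 1)) : ℕ) = 0) then _ else _) = _
  rw [if_pos (by simp)]

lemma G_tail (st : ℕ × (Fin m → ℕ)) {c : ℕ} (hc : c ≤ m) :
    ext' (m + 1) (G m st) (c + 1) = ∑ l ∈ Ico c m, ext' m st.2 l := by
  rcases Nat.lt_or_ge c m with h | h
  · rw [ext', dif_pos (by omega : c + 1 < m + 1)]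
    show (if ((c + 1 : ℕ) = 0) then _ else _) = _
    rw [if_neg (by simp)]
    simp
  · have : c = m := by omega
    subst this
    rw [ext', dif_neg (by omega), Ico_self, sum_empty]

lemma FG (st : ℕ × (Fin m → ℕ)) : F m (G m st) = st := by
  have hsum := sumG st
  refine Prod.ext ?_ ?_
  · show G m st 0 - ∑ i : Fin m, G m st i.succ = st.1
    rw [hsum, G_head]
    omega
  · funext i
    show bfun m (G m st) (i : ℕ) - bfun m (G m st) ((i : ℕ) + 1) = st.2 i
    rw [bfun, bfun, G_tail st (le_of_lt i.isLt), G_tail st (by omega : (i:ℕ) + 1 ≤ m),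
      Finset.sum_eq_sum_Ico_succ_bot i.isLt, ext', dif_pos i.isLt]
    simp

lemma G_antitone (st : ℕ × (Fin m → ℕ)) : Antitone (G m st) := by
  rw [Fin.antitone_iff_succ_le]
  intro i
  have hsucc : G m st i.succ = ∑ l ∈ Ico (i : ℕ) m, ext' m st.2 l := by
    show (if ((i : ℕ) + 1 : ℕ) = 0 then _ else _) = _
    rw [if_neg (by omega)]; simp
  rw [hsucc]
  by_cases h0 : (i : ℕ) = 0
  · have hcast : G m st i.castSucc = st.1 + ∑ j : Fin m, ((j : ℕ) + 1) * st.2 j := by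
      show (if (((i.castSucc : Fin (m + 1)) : ℕ) = 0) then _ else _) = _
      rw [if_pos (by simpa using h0)]
    rw [hcast, h0]
    calc ∑ l ∈ Ico 0 m, ext' m st.2 l = ∑ l ∈ range m, ext' m st.2 l := by
            rw [Finset.range_eq_Ico]
      _ ≤ ∑ l ∈ range m, (l + 1) * ext' m st.2 l :=
            Finset.sum_le_sum fun l _ => Nat.le_mul_of_pos_left _ (by omega)
      _ = ∑ j : Fin m, ((j : ℕ) + 1) * st.2 j := by
            rw [← Fin.sum_univ_eq_sum_range (fun j => (j + 1) * ext' m st.2 j)]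
            exact Finset.sum_congr rfl fun j _ => by rw [ext'_coe]
      _ ≤ st.1 + ∑ j : Fin m, ((j : ℕ) + 1) * st.2 j := Nat.le_add_left _ _
  · have hcast : G m st i.castSucc = ∑ l ∈ Ico ((i : ℕ) - 1) m, ext' m st.2 l := by
      show (if (((i.castSucc : Fin (m + 1)) : ℕ) = 0) then _ else _) = _
      rw [if_neg (by simpa using h0)]
      simp
    rw [hcast]
    exact Finset.sum_le_sum_of_subset (Ico_subset_Ico_left (by omega))

lemma filter_sum (f : Fin (m + 1) → ℕ) :
    ∑ j ∈ Finset.univ.filter (fun j : Fin (m + 1) => 0 < (j : ℕ)), f j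
      = ∑ i : Fin m, f i.succ := by
  rw [Finset.sum_filter, Fin.sum_univ_succ]
  simp

end Stmt10Aux

open Stmt10Aux

/-- partitions of `n` into at most `k` parts with `λ₁ ≥ λ₂ + ⋯ + λ_k`
are counted by `(1-q)⁻¹ ∏_{i=1}^{k-1} (1-q^{2i})⁻¹`. -/
theorem stmt_10 (k n : ℕ) (hk : 0 < k) :
    {lam : Fin k → ℕ | Antitone lam ∧
      (∑ j ∈ Finset.univ.filter (fun j : Fin k => 0 < (j : ℕ)), lam j) ≤ lam ⟨0, hk⟩ ∧
      ∑ i, lam i = n}.ncard =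
    {st : ℕ × (Fin (k - 1) → ℕ) |
      st.1 + ∑ i : Fin (k - 1), 2 * ((i : ℕ) + 1) * st.2 i = n}.ncard := by
  obtain ⟨m, rfl⟩ : ∃ m, k = m + 1 := ⟨k - 1, by omega⟩
  rw [← Nat.card_coe_set_eq, ← Nat.card_coe_set_eq]
  apply Nat.card_congr
  have h00 : (⟨0, hk⟩ : Fin (m + 1)) = 0 := by ext; simp
  have hdouble : ∀ t : Fin m → ℕ,
      ∑ i : Fin m, 2 * ((i : ℕ) + 1) * t i = 2 * ∑ i : Fin m, ((i : ℕ) + 1) * t i := by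
    intro t
    rw [Finset.mul_sum]
    exact Finset.sum_congr rfl fun i _ => by ring
  refine ⟨fun x => ⟨F m x.1, ?_⟩, fun y => ⟨G m y.1, ?_⟩, ?_, ?_⟩
  · obtain ⟨lam, hA, hle, hsum⟩ := x
    rw [h00] at hle
    rw [filter_sum] at hle
    rw [Fin.sum_univ_succ] at hsum
    show (F m lam).1 + ∑ i : Fin m, 2 * ((i : ℕ) + 1) * (F m lam).2 i = n
    rw [hdouble]
    show lam 0 - (∑ i : Fin m, lam i.succ) + 2 * ∑ i : Fin m, ((i : ℕ) + 1) *
      (bfun m lam (i : ℕ) - bfun m lam ((i : ℕ) + 1)) = n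
    rw [sumF lam hA]
    omega
  · obtain ⟨st, hst⟩ := y
    show G m st ∈ _
    replace hst : st.1 + ∑ i : Fin m, 2 * ((i : ℕ) + 1) * st.2 i = n := hst
    refine ⟨G_antitone st, ?_, ?_⟩
    · rw [h00, filter_sum, sumG, G_head]
      exact Nat.le_add_left _ _
    · rw [Fin.sum_univ_succ, sumG, G_head]
      rw [hdouble st.2] at hst
      omega
  · rintro ⟨lam, hA, hle, hsum⟩
    apply Subtype.ext
    show G m (F m lam) = lam
    rw [h00, filter_sum] at hle
    exact GF lam hA hle
  · rintro ⟨st, hst⟩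
    exact Subtype.ext (FG st)
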